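/- Suppose there exists a state ρ̂ on ℂ^{d_A} with I_c(ρ̂) < 0, and suppose there exists a positive definite (full-rank) state ρ* attaining the maximum of the coherent information, i.e. I_c(ρ*) = Q^{(1)}(N_B). Then C_p^{(1)}(N_B) > Q^{(1)}(N_B). -/

import Mathlib

open Matrix BigOperators
open scoped ComplexOrder

noncomputable section

/-- Matrix logarithm via the spectral decomposition (junk value `0` off Hermitian matrices;
eigenvalue `0` contributes `Real.log 0 = 0`). -/
def matLog {n : Type*} [Fintype n] [DecidableEq n] (ρ : Matrix n n ℂ) : Matrix n n ℂ :=
  if h : ρ.IsHermitian then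
    (h.eigenvectorUnitary : Matrix n n ℂ) *
      Matrix.diagonal (fun i => (Real.log (h.eigenvalues i) : ℂ)) *
      (h.eigenvectorUnitary : Matrix n n ℂ)ᴴ
  else 0

/-- Von Neumann entropy `H(ρ) = -Tr[ρ log ρ]`. -/
def vnEntropy {n : Type*} [Fintype n] [DecidableEq n] (ρ : Matrix n n ℂ) : ℝ :=
  - (ρ * matLog ρ).trace.re

/-- Quantum relative entropy `D(ρ‖σ) = Tr[ρ (log ρ - log σ)]`. -/
def relEntropy {n : Type*} [Fintype n] [DecidableEq n] (ρ σ : Matrix n n ℂ) : ℝ :=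
  (ρ * (matLog ρ - matLog σ)).trace.re

/-- A state: positive semidefinite with unit trace. -/
def IsState {n : Type*} [Fintype n] (ρ : Matrix n n ℂ) : Prop :=
  ρ.PosSemidef ∧ ρ.trace = 1

/-- A pure (rank-one) state `|ψ⟩⟨ψ|` for a unit vector `ψ`. -/
def IsPureState {n : Type*} [Fintype n] (ρ : Matrix n n ℂ) : Prop :=
  ∃ ψ : n → ℂ, (∑ i, Complex.normSq (ψ i)) = 1 ∧ ρ = Matrix.vecMulVec ψ (star ψ)

/-- Support (range) inclusion for matrices. -/
def suppLE {n : Type*} [Fintype n] [DecidableEq n] (ρ σ : Matrix n n ℂ) : Prop :=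
  LinearMap.range (Matrix.toLin' ρ) ≤ LinearMap.range (Matrix.toLin' σ)

/-- Partial trace over the second tensor factor. -/
def ptraceSnd {α β : Type*} [Fintype β] (M : Matrix (α × β) (α × β) ℂ) : Matrix α α ℂ :=
  Matrix.of fun i j => ∑ k, M (i, k) (j, k)

/-- Partial trace over the first tensor factor. -/
def ptraceFst {α β : Type*} [Fintype α] (M : Matrix (α × β) (α × β) ℂ) : Matrix β β ℂ :=
  Matrix.of fun i j => ∑ k, M (k, i) (k, j)

variable {dA dB dE : ℕ}

/-- The channel `N_B(ρ) = Tr_E[U ρ U†]`. -/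
def chanB (U : Matrix (Fin dB × Fin dE) (Fin dA) ℂ) (ρ : Matrix (Fin dA) (Fin dA) ℂ) :
    Matrix (Fin dB) (Fin dB) ℂ := ptraceSnd (U * ρ * Uᴴ)

/-- The complementary channel `N_E(ρ) = Tr_B[U ρ U†]`. -/
def chanE (U : Matrix (Fin dB × Fin dE) (Fin dA) ℂ) (ρ : Matrix (Fin dA) (Fin dA) ℂ) :
    Matrix (Fin dE) (Fin dE) ℂ := ptraceFst (U * ρ * Uᴴ)

/-- Coherent information `I_c(ρ) = H(N_B(ρ)) - H(N_E(ρ))`. -/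
def cohInfo (U : Matrix (Fin dB × Fin dE) (Fin dA) ℂ) (ρ : Matrix (Fin dA) (Fin dA) ℂ) : ℝ :=
  vnEntropy (chanB U ρ) - vnEntropy (chanE U ρ)

/-- Holevo quantity of the ensemble `(p, σ)` with respect to the channel `N`. -/
def holevo {ι inn out : Type*} [Fintype ι] [Fintype out] [DecidableEq out]
    [AddCommMonoid (Matrix inn inn ℂ)]
    (N : Matrix inn inn ℂ → Matrix out out ℂ)
    (p : ι → ℝ) (σ : ι → Matrix inn inn ℂ) : ℝ :=
  vnEntropy (N (∑ u, (p u : ℂ) • σ u)) - ∑ u, p u * vnEntropy (N (σ u))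

/-- A finite ensemble: a probability distribution together with states. -/
def IsEnsemble {ι inn : Type*} [Fintype ι] [Fintype inn]
    (p : ι → ℝ) (σ : ι → Matrix inn inn ℂ) : Prop :=
  (∀ u, 0 ≤ p u) ∧ (∑ u, p u = 1) ∧ (∀ u, IsState (σ u))

/-- `Q^{(1)}`: optimized coherent information. -/
def Q1 (U : Matrix (Fin dB × Fin dE) (Fin dA) ℂ) : ℝ :=
  sSup { r | ∃ ρ, IsState ρ ∧ r = cohInfo U ρ }

/-- `C_p^{(1)}`: optimized difference of Holevo quantities. -/
def Cp1 (U : Matrix (Fin dB × Fin dE) (Fin dA) ℂ) : ℝ :=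
  sSup { r | ∃ (m : ℕ) (p : Fin m → ℝ) (σ : Fin m → Matrix (Fin dA) (Fin dA) ℂ),
    IsEnsemble p σ ∧ r = holevo (chanB U) p σ - holevo (chanE U) p σ }

variable {n : Type*} [Fintype n] [DecidableEq n]

lemma matLog_mulVec_eigen {A : Matrix n n ℂ} (hA : A.IsHermitian) {w : n → ℂ} {μ : ℝ}
    (hw : A *ᵥ w = (μ : ℂ) • w) :
    matLog A *ᵥ w = (Real.log μ : ℂ) • w := by
  set V : Matrix n n ℂ := (hA.eigenvectorUnitary : Matrix n n ℂ) with hV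
  have hVV : Vᴴ * V = 1 := by
    simpa [star_eq_conjTranspose] using Unitary.coe_star_mul_self hA.eigenvectorUnitary
  have hVV' : V * Vᴴ = 1 := by
    simpa [star_eq_conjTranspose] using Unitary.coe_mul_star_self hA.eigenvectorUnitary
  set y : n → ℂ := Vᴴ *ᵥ w with hy
  have hspec : A = V * Matrix.diagonal (fun i => (hA.eigenvalues i : ℂ)) * Vᴴ := by
    simpa [Function.comp_def, Matrix.star_eq_conjTranspose] using hA.spectral_theorem
  have hDy : ∀ i, (hA.eigenvalues i : ℂ) * y i = (μ : ℂ) * y i := by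
    have h1 : Vᴴ *ᵥ (A *ᵥ w) = Vᴴ *ᵥ ((μ:ℂ) • w) := congrArg _ hw
    have h2 : Matrix.diagonal (fun i => (hA.eigenvalues i : ℂ)) *ᵥ y = (μ:ℂ) • y := by
      have : Vᴴ *ᵥ (A *ᵥ w) = Matrix.diagonal (fun i => (hA.eigenvalues i : ℂ)) *ᵥ y := by
        conv_lhs => rw [hspec]
        simp only [← Matrix.mulVec_mulVec, hy]
        rw [Matrix.mulVec_mulVec, hVV, Matrix.one_mulVec]
      rw [← this, h1, Matrix.mulVec_smul, hy]
    intro i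
    have := congrFun h2 i
    simpa [Matrix.mulVec_diagonal] using this
  have hLy : Matrix.diagonal (fun i => (Real.log (hA.eigenvalues i) : ℂ)) *ᵥ y
      = (Real.log μ : ℂ) • y := by
    funext i
    simp only [Matrix.mulVec_diagonal, Pi.smul_apply, smul_eq_mul]
    rcases eq_or_ne (y i) 0 with h | h
    · simp [h]
    · have h3 := hDy i
      have h4 : hA.eigenvalues i = μ := by
        have := mul_right_cancel₀ h h3
        exact_mod_cast this
      rw [h4]
  have hw' : V *ᵥ y = w := by
    rw [hy, Matrix.mulVec_mulVec, hVV', Matrix.one_mulVec]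
  rw [matLog, dif_pos hA, ← hV]
  calc (V * Matrix.diagonal (fun i => (Real.log (hA.eigenvalues i) : ℂ)) * Vᴴ) *ᵥ w
      = V *ᵥ (Matrix.diagonal (fun i => (Real.log (hA.eigenvalues i) : ℂ)) *ᵥ y) := by
        simp [← Matrix.mulVec_mulVec, hy]
    _ = V *ᵥ ((Real.log μ : ℂ) • y) := by rw [hLy]
    _ = (Real.log μ : ℂ) • (V *ᵥ y) := by rw [Matrix.mulVec_smul]
    _ = (Real.log μ : ℂ) • w := by rw [hw']

lemma eq_of_mulVec_col {m : Type*} [Fintype m] [DecidableEq m]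
    {X Y : Matrix n m ℂ} {V : Matrix m m ℂ} (hVV' : V * Vᴴ = 1)
    (h : ∀ j, X *ᵥ (fun i => V i j) = Y *ᵥ (fun i => V i j)) : X = Y := by
  have hXV : X * V = Y * V := by
    ext i j
    have := congrFun (h j) i
    simpa [Matrix.mulVec, Matrix.mul_apply, dotProduct] using this
  calc X = X * (V * Vᴴ) := by rw [hVV', Matrix.mul_one]
    _ = (X * V) * Vᴴ := by rw [Matrix.mul_assoc]
    _ = (Y * V) * Vᴴ := by rw [hXV]
    _ = Y * (V * Vᴴ) := by rw [Matrix.mul_assoc]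
    _ = Y := by rw [hVV', Matrix.mul_one]

lemma matLog_unitary_conj {A W : Matrix n n ℂ} {d : n → ℝ}
    (hW : Wᴴ * W = 1) (hW' : W * Wᴴ = 1)
    (hA : A = W * Matrix.diagonal (fun i => (d i : ℂ)) * Wᴴ) :
    matLog A = W * Matrix.diagonal (fun i => (Real.log (d i) : ℂ)) * Wᴴ := by
  have colfact : ∀ (X : Matrix n n ℂ) (j : n), X *ᵥ (fun i => W i j) = fun i => (X * W) i j := by
    intro X j; funext i; simp [Matrix.mulVec, Matrix.mul_apply, dotProduct]
  apply eq_of_mulVec_col hW'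
  intro j
  have heig : A *ᵥ (fun i => W i j) = ((d j : ℝ) : ℂ) • (fun i => W i j) := by
    rw [colfact]
    have hAW : A * W = W * Matrix.diagonal (fun i => (d i : ℂ)) := by
      rw [hA, Matrix.mul_assoc, hW, Matrix.mul_one]
    funext i
    simp [hAW, Matrix.mul_diagonal, mul_comm]
  have hHerm : A.IsHermitian := by
    rw [hA]
    apply Matrix.isHermitian_mul_mul_conjTranspose
    exact Matrix.isHermitian_diagonal_of_self_adjoint _ (funext fun i => by
      simp [Complex.star_def, Complex.conj_ofReal])
  rw [matLog_mulVec_eigen hHerm heig, colfact]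
  have hRW : (W * Matrix.diagonal (fun i => (Real.log (d i) : ℂ)) * Wᴴ) * W
      = W * Matrix.diagonal (fun i => (Real.log (d i) : ℂ)) := by
    rw [Matrix.mul_assoc, hW, Matrix.mul_one]
  funext i
  simp [hRW, Matrix.mul_diagonal, mul_comm]

lemma matLog_mul_comm {a b : Type*} [Fintype a] [DecidableEq a] [Fintype b] [DecidableEq b]
    (M : Matrix a b ℂ) :
    matLog (M * Mᴴ) * M = M * matLog (Mᴴ * M) := by
  have h2 : (Mᴴ * M).IsHermitian := Matrix.isHermitian_conjTranspose_mul_self M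
  have h1 : (M * Mᴴ).IsHermitian := Matrix.isHermitian_mul_conjTranspose_self M
  set V := (h2.eigenvectorUnitary : Matrix b b ℂ) with hVdef
  have hVV' : V * Vᴴ = 1 := by
    simpa [star_eq_conjTranspose] using Unitary.coe_mul_star_self h2.eigenvectorUnitary
  apply eq_of_mulVec_col hVV'
  intro j
  have hcol : (fun i => V i j) = ⇑(h2.eigenvectorBasis j) := by
    funext i; simp [hVdef]
  have hv : (Mᴴ * M) *ᵥ (fun i => V i j) = ((h2.eigenvalues j : ℝ) : ℂ) • (fun i => V i j) := by
    rw [hcol]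
    have := h2.mulVec_eigenvectorBasis j
    rw [this]
    funext i; simp [Complex.real_smul]
  have heig2 : (M * Mᴴ) *ᵥ (M *ᵥ (fun i => V i j))
      = ((h2.eigenvalues j : ℝ) : ℂ) • (M *ᵥ (fun i => V i j)) := by
    rw [Matrix.mulVec_mulVec, Matrix.mul_assoc, ← Matrix.mulVec_mulVec, hv,
      Matrix.mulVec_smul]
  rw [← Matrix.mulVec_mulVec, matLog_mulVec_eigen h1 heig2, ← Matrix.mulVec_mulVec,
    matLog_mulVec_eigen h2 hv, Matrix.mulVec_smul]

lemma vnEntropy_mul_comm {a b : Type*} [Fintype a] [DecidableEq a] [Fintype b] [DecidableEq b]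
    (M : Matrix a b ℂ) : vnEntropy (M * Mᴴ) = vnEntropy (Mᴴ * M) := by
  unfold vnEntropy
  congr 2
  calc ((M * Mᴴ) * matLog (M * Mᴴ)).trace
      = (M * (Mᴴ * matLog (M * Mᴴ))).trace := by rw [Matrix.mul_assoc]
    _ = ((Mᴴ * matLog (M * Mᴴ)) * M).trace := by rw [Matrix.trace_mul_comm]
    _ = (Mᴴ * (matLog (M * Mᴴ) * M)).trace := by rw [Matrix.mul_assoc]
    _ = (Mᴴ * (M * matLog (Mᴴ * M))).trace := by rw [matLog_mul_comm]
    _ = ((Mᴴ * M) * matLog (Mᴴ * M)).trace := by rw [Matrix.mul_assoc]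

lemma matLog_map_conj {A : Matrix n n ℂ} (hA : A.IsHermitian) :
    matLog (A.map (starRingEnd ℂ)) = (matLog A).map (starRingEnd ℂ) := by
  set V := (hA.eigenvectorUnitary : Matrix n n ℂ) with hVdef
  have hVV : Vᴴ * V = 1 := by
    simpa [star_eq_conjTranspose] using Unitary.coe_star_mul_self hA.eigenvectorUnitary
  have hVV' : V * Vᴴ = 1 := by
    simpa [star_eq_conjTranspose] using Unitary.coe_mul_star_self hA.eigenvectorUnitary
  set W := V.map (starRingEnd ℂ) with hWdef
  have hWH : Wᴴ = (Vᴴ).map (starRingEnd ℂ) := by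
    ext i j; simp [hWdef, Matrix.conjTranspose_apply, Matrix.map_apply]
  have hmul : ∀ (X Y : Matrix n n ℂ), (X * Y).map (starRingEnd ℂ)
      = X.map (starRingEnd ℂ) * Y.map (starRingEnd ℂ) := by
    intro X Y; ext i j
    simp [Matrix.mul_apply, Matrix.map_apply, map_sum]
  have hone : (1 : Matrix n n ℂ).map (starRingEnd ℂ) = 1 := by
    ext i j; simp [Matrix.map_apply, Matrix.one_apply, apply_ite]
  have hW : Wᴴ * W = 1 := by rw [hWH, hWdef, ← hmul, hVV, hone]
  have hW' : W * Wᴴ = 1 := by rw [hWH, hWdef, ← hmul, hVV', hone]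
  have hdiag : ∀ (d : n → ℝ), (Matrix.diagonal (fun i => (d i : ℂ))).map (starRingEnd ℂ)
      = Matrix.diagonal (fun i => (d i : ℂ)) := by
    intro d; ext i j
    by_cases h : i = j <;>
      simp [Matrix.map_apply, Matrix.diagonal_apply, h, Complex.conj_ofReal]
  have hspec : A = V * Matrix.diagonal (fun i => (hA.eigenvalues i : ℂ)) * Vᴴ := by
    simpa [Function.comp_def, Matrix.star_eq_conjTranspose] using hA.spectral_theorem
  have hconjspec : A.map (starRingEnd ℂ)
      = W * Matrix.diagonal (fun i => (hA.eigenvalues i : ℂ)) * Wᴴ := by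
    rw [hWH, hWdef, ← hdiag hA.eigenvalues, ← hmul, ← hmul, ← hspec]
  rw [matLog_unitary_conj hW hW' hconjspec]
  have hlog : matLog A = V * Matrix.diagonal (fun i => (Real.log (hA.eigenvalues i) : ℂ)) * Vᴴ := by
    rw [matLog, dif_pos hA]
  rw [hlog, hmul, hmul, hWdef, ← hWH, hdiag]

lemma vnEntropy_map_conj {A : Matrix n n ℂ} (hA : A.IsHermitian) :
    vnEntropy (A.map (starRingEnd ℂ)) = vnEntropy A := by
  unfold vnEntropy
  rw [matLog_map_conj hA]
  have hmul : (A * matLog A).map (starRingEnd ℂ)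
      = A.map (starRingEnd ℂ) * (matLog A).map (starRingEnd ℂ) := by
    ext i j; simp [Matrix.mul_apply, Matrix.map_apply, map_sum]
  rw [← hmul]
  have htr : ∀ X : Matrix n n ℂ, (X.map (starRingEnd ℂ)).trace = starRingEnd ℂ X.trace := by
    intro X
    simp only [Matrix.trace, Matrix.diag, Matrix.map_apply, map_sum]
  rw [htr, Complex.conj_re]

lemma trace_mul_matLog {A : Matrix n n ℂ} (hA : A.IsHermitian) :
    (A * matLog A).trace
      = ∑ i, ((hA.eigenvalues i : ℂ) * (Real.log (hA.eigenvalues i) : ℂ)) := by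
  set V := (hA.eigenvectorUnitary : Matrix n n ℂ) with hVdef
  have hVV : Vᴴ * V = 1 := by
    simpa [star_eq_conjTranspose] using Unitary.coe_star_mul_self hA.eigenvectorUnitary
  have hspec : A = V * Matrix.diagonal (fun i => (hA.eigenvalues i : ℂ)) * Vᴴ := by
    simpa [Function.comp_def, Matrix.star_eq_conjTranspose] using hA.spectral_theorem
  have hlog : matLog A = V * Matrix.diagonal (fun i => (Real.log (hA.eigenvalues i) : ℂ)) * Vᴴ := by
    rw [matLog, dif_pos hA]
  have hD : Vᴴ * A * V = Matrix.diagonal (fun i => (hA.eigenvalues i : ℂ)) := by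
    have := hA.conjStarAlgAut_star_eigenvectorUnitary
    simpa [Unitary.conjStarAlgAut_apply, Matrix.star_eq_conjTranspose, Function.comp_def, hVdef] using this
  calc (A * matLog A).trace
      = ((A * (V * Matrix.diagonal (fun i => (Real.log (hA.eigenvalues i) : ℂ)))) * Vᴴ).trace := by
        rw [hlog, ← Matrix.mul_assoc, ← Matrix.mul_assoc]
    _ = (Vᴴ * (A * (V * Matrix.diagonal (fun i => (Real.log (hA.eigenvalues i) : ℂ))))).trace := by
        rw [Matrix.trace_mul_comm]
    _ = ((Vᴴ * A * V) * Matrix.diagonal (fun i => (Real.log (hA.eigenvalues i) : ℂ))).trace := by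
        rw [Matrix.mul_assoc, Matrix.mul_assoc]
    _ = ∑ i, ((hA.eigenvalues i : ℂ) * (Real.log (hA.eigenvalues i) : ℂ)) := by
        rw [hD, Matrix.diagonal_mul_diagonal, Matrix.trace_diagonal]

lemma vnEntropy_eq_sum {A : Matrix n n ℂ} (hA : A.IsHermitian) :
    vnEntropy A = ∑ i, Real.negMulLog (hA.eigenvalues i) := by
  unfold vnEntropy
  rw [trace_mul_matLog hA]
  rw [Complex.re_sum]
  rw [← Finset.sum_neg_distrib]
  apply Finset.sum_congr rfl
  intro i _
  rw [← Complex.ofReal_mul]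
  simp [Real.negMulLog]

lemma trace_eq_sum_eigenvalues {A : Matrix n n ℂ} (hA : A.IsHermitian) :
    A.trace = ∑ i, (hA.eigenvalues i : ℂ) := by
  set V := (hA.eigenvectorUnitary : Matrix n n ℂ) with hVdef
  have hVV' : V * Vᴴ = 1 := by
    simpa [star_eq_conjTranspose] using Unitary.coe_mul_star_self hA.eigenvectorUnitary
  have hD : Vᴴ * A * V = Matrix.diagonal (fun i => (hA.eigenvalues i : ℂ)) := by
    have := hA.conjStarAlgAut_star_eigenvectorUnitary
    simpa [Unitary.conjStarAlgAut_apply, Matrix.star_eq_conjTranspose, Function.comp_def, hVdef] using this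
  calc A.trace = (A * (V * Vᴴ)).trace := by rw [hVV', Matrix.mul_one]
    _ = ((A * V) * Vᴴ).trace := by rw [Matrix.mul_assoc]
    _ = (Vᴴ * (A * V)).trace := by rw [Matrix.trace_mul_comm]
    _ = (Vᴴ * A * V).trace := by rw [Matrix.mul_assoc]
    _ = ∑ i, (hA.eigenvalues i : ℂ) := by rw [hD, Matrix.trace_diagonal]

lemma sum_eigenvalues_of_state {ρ : Matrix n n ℂ} (h : IsState ρ) :
    ∑ i, h.1.1.eigenvalues i = 1 := by
  have h2 : (1 : ℂ) = ∑ i, (h.1.1.eigenvalues i : ℂ) :=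
    h.2.symm.trans (trace_eq_sum_eigenvalues h.1.1)
  exact_mod_cast h2.symm

lemma vnEntropy_state_nonneg {ρ : Matrix n n ℂ} (h : IsState ρ) : 0 ≤ vnEntropy ρ := by
  rw [vnEntropy_eq_sum h.1.1]
  apply Finset.sum_nonneg
  intro i _
  apply Real.negMulLog_nonneg (h.1.eigenvalues_nonneg i)
  calc h.1.1.eigenvalues i ≤ ∑ j, h.1.1.eigenvalues j :=
        Finset.single_le_sum (fun j _ => h.1.eigenvalues_nonneg j) (Finset.mem_univ i)
    _ = 1 := sum_eigenvalues_of_state h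

lemma vnEntropy_state_le {ρ : Matrix n n ℂ} [Nonempty n] (h : IsState ρ) :
    vnEntropy ρ ≤ Real.log (Fintype.card n) := by
  rw [vnEntropy_eq_sum h.1.1]
  set c : ℝ := (Fintype.card n : ℝ) with hc
  have hc0 : 0 < c := by
    simp [hc, Fintype.card_pos]
  have hj := Real.concaveOn_negMulLog.le_map_sum
    (t := Finset.univ) (w := fun _ : n => c⁻¹) (p := fun i => h.1.1.eigenvalues i)
    (fun i _ => by positivity)
    (by simp [Finset.sum_const, hc])
    (fun i _ => h.1.eigenvalues_nonneg i)
  have hsum : ∑ i, c⁻¹ • h.1.1.eigenvalues i = c⁻¹ := by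
    rw [← Finset.smul_sum, sum_eigenvalues_of_state h, smul_eq_mul, mul_one]
  rw [hsum] at hj
  have hval : Real.negMulLog c⁻¹ = c⁻¹ * Real.log c := by
    simp [Real.negMulLog, Real.log_inv]
  rw [hval] at hj
  have hj' : c⁻¹ * (∑ i, Real.negMulLog (h.1.1.eigenvalues i)) ≤ c⁻¹ * Real.log c := by
    calc c⁻¹ * (∑ i, Real.negMulLog (h.1.1.eigenvalues i))
        = ∑ i, c⁻¹ • Real.negMulLog (h.1.1.eigenvalues i) := by
          rw [Finset.mul_sum]; rfl
      _ ≤ c⁻¹ * Real.log c := hj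
  have := mul_le_mul_iff_right₀ (inv_pos.mpr hc0) |>.mp hj'
  simpa [hc] using this

lemma star_ite (c : Prop) [Decidable c] (a b : ℂ) :
    star (if c then a else b) = if c then star a else star b := apply_ite star c a b

lemma ptraceSnd_trace {α β : Type*} [Fintype α] [Fintype β]
    (M : Matrix (α × β) (α × β) ℂ) : (ptraceSnd M).trace = M.trace := by
  simp [ptraceSnd, Matrix.trace, Matrix.diag, Fintype.sum_prod_type]

lemma ptraceFst_trace {α β : Type*} [Fintype α] [Fintype β]
    (M : Matrix (α × β) (α × β) ℂ) : (ptraceFst M).trace = M.trace := by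
  rw [Matrix.trace, Matrix.trace]
  simp only [ptraceFst, Matrix.diag, Matrix.of_apply, Fintype.sum_prod_type]
  exact Finset.sum_comm

lemma ptraceSnd_posSemidef {α β : Type*} [Fintype α] [Fintype β] [DecidableEq β]
    {M : Matrix (α × β) (α × β) ℂ} (hM : M.PosSemidef) : (ptraceSnd M).PosSemidef := by
  rw [Matrix.posSemidef_iff_dotProduct_mulVec]
  constructor
  · ext i j
    simp only [Matrix.conjTranspose_apply, ptraceSnd, Matrix.of_apply, star_sum]
    apply Finset.sum_congr rfl
    intro k _
    exact hM.1.apply (i,k) (j,k)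
  · intro x
    have key : dotProduct (star x) (ptraceSnd M *ᵥ x)
        = ∑ k : β, dotProduct (star (fun p : α × β => if p.2 = k then x p.1 else 0))
            (M *ᵥ (fun p : α × β => if p.2 = k then x p.1 else 0)) := by
      simp only [dotProduct, Matrix.mulVec, ptraceSnd, Matrix.of_apply, Pi.star_apply,
        star_ite, star_zero, Fintype.sum_prod_type, mul_ite, ite_mul, mul_zero, zero_mul,
        Finset.sum_ite_eq, Finset.sum_ite_eq', Finset.mem_univ, if_true,
        Finset.mul_sum, Finset.sum_mul]
      refine Eq.symm ?_
      calc (∑ k : β, ∑ i : α, ∑ e : β, ∑ j : α,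
              if e = k then star (x i) * (M (i, e) (j, k) * x j) else 0)
          = ∑ k : β, ∑ i : α, ∑ j : α, star (x i) * (M (i, k) (j, k) * x j) := by
            refine Finset.sum_congr rfl fun k _ => Finset.sum_congr rfl fun i _ => ?_
            rw [Finset.sum_comm]
            simp
        _ = ∑ i : α, ∑ k : β, ∑ j : α, star (x i) * (M (i, k) (j, k) * x j) :=
            Finset.sum_comm
        _ = ∑ i : α, ∑ j : α, ∑ k : β, star (x i) * (M (i, k) (j, k) * x j) :=
            Finset.sum_congr rfl fun i _ => Finset.sum_comm
    rw [key]
    exact Finset.sum_nonneg fun k _ => hM.dotProduct_mulVec_nonneg _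

lemma ptraceFst_posSemidef {α β : Type*} [Fintype α] [Fintype β] [DecidableEq α]
    {M : Matrix (α × β) (α × β) ℂ} (hM : M.PosSemidef) : (ptraceFst M).PosSemidef := by
  rw [Matrix.posSemidef_iff_dotProduct_mulVec]
  constructor
  · ext i j
    simp only [Matrix.conjTranspose_apply, ptraceFst, Matrix.of_apply, star_sum]
    apply Finset.sum_congr rfl
    intro k _
    exact hM.1.apply (k,i) (k,j)
  · intro x
    have key : dotProduct (star x) (ptraceFst M *ᵥ x)
        = ∑ k : α, dotProduct (star (fun p : α × β => if p.1 = k then x p.2 else 0))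
            (M *ᵥ (fun p : α × β => if p.1 = k then x p.2 else 0)) := by
      simp only [dotProduct, Matrix.mulVec, ptraceFst, Matrix.of_apply, Pi.star_apply,
        star_ite, star_zero, Fintype.sum_prod_type, mul_ite, ite_mul, mul_zero, zero_mul,
        Finset.sum_ite_eq, Finset.sum_ite_eq', Finset.mem_univ, if_true,
        Finset.mul_sum, Finset.sum_mul]
      refine Eq.symm ?_
      calc (∑ k : α, ∑ i : α, ∑ e : β, ∑ j : α, ∑ f : β,
              if j = k then (if i = k then star (x e) * (M (i, e) (j, f) * x f) else 0) else 0)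
          = ∑ k : α, ∑ i : α, ∑ e : β, ∑ f : β,
              (if i = k then star (x e) * (M (i, e) (k, f) * x f) else 0) := by
            refine Finset.sum_congr rfl fun k _ => Finset.sum_congr rfl fun i _ =>
              Finset.sum_congr rfl fun e _ => ?_
            rw [Finset.sum_comm]
            simp
        _ = ∑ k : α, ∑ e : β, ∑ f : β, star (x e) * (M (k, e) (k, f) * x f) := by
            refine Finset.sum_congr rfl fun k _ => ?_
            rw [Finset.sum_comm]
            simp
        _ = ∑ e : β, ∑ k : α, ∑ f : β, star (x e) * (M (k, e) (k, f) * x f) :=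
            Finset.sum_comm
        _ = ∑ e : β, ∑ f : β, ∑ k : α, star (x e) * (M (k, e) (k, f) * x f) :=
            Finset.sum_congr rfl fun e _ => Finset.sum_comm
    rw [key]
    exact Finset.sum_nonneg fun k _ => hM.dotProduct_mulVec_nonneg _

lemma trace_conj_isometry {U : Matrix (Fin dB × Fin dE) (Fin dA) ℂ} (hU : Uᴴ * U = 1)
    (ρ : Matrix (Fin dA) (Fin dA) ℂ) : (U * ρ * Uᴴ).trace = ρ.trace := by
  rw [Matrix.trace_mul_cycle, hU, Matrix.one_mul]

lemma chanB_isState {U : Matrix (Fin dB × Fin dE) (Fin dA) ℂ} (hU : Uᴴ * U = 1)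
    {ρ : Matrix (Fin dA) (Fin dA) ℂ} (h : IsState ρ) : IsState (chanB U ρ) :=
  ⟨ptraceSnd_posSemidef (h.1.mul_mul_conjTranspose_same U),
   by rw [chanB, ptraceSnd_trace, trace_conj_isometry hU, h.2]⟩

lemma chanE_isState {U : Matrix (Fin dB × Fin dE) (Fin dA) ℂ} (hU : Uᴴ * U = 1)
    {ρ : Matrix (Fin dA) (Fin dA) ℂ} (h : IsState ρ) : IsState (chanE U ρ) :=
  ⟨ptraceFst_posSemidef (h.1.mul_mul_conjTranspose_same U),
   by rw [chanE, ptraceFst_trace, trace_conj_isometry hU, h.2]⟩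

lemma conj_vecMulVec (U : Matrix (Fin dB × Fin dE) (Fin dA) ℂ) (ψ : Fin dA → ℂ) :
    U * Matrix.vecMulVec ψ (star ψ) * Uᴴ
      = Matrix.vecMulVec (U *ᵥ ψ) (star (U *ᵥ ψ)) := by
  ext p q
  simp only [Matrix.mul_apply, Matrix.vecMulVec_apply, Matrix.conjTranspose_apply,
    Matrix.mulVec, dotProduct, Pi.star_apply, star_sum, star_mul', Finset.mul_sum,
    Finset.sum_mul]
  refine Finset.sum_congr rfl fun a _ => Finset.sum_congr rfl fun b _ => by ring

lemma cohInfo_pure (U : Matrix (Fin dB × Fin dE) (Fin dA) ℂ) (ψ : Fin dA → ℂ) :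
    cohInfo U (Matrix.vecMulVec ψ (star ψ)) = 0 := by
  set φ : Fin dB × Fin dE → ℂ := U *ᵥ ψ with hφ
  set M : Matrix (Fin dB) (Fin dE) ℂ := Matrix.of (fun i k => φ (i, k)) with hM
  have hB : chanB U (Matrix.vecMulVec ψ (star ψ)) = M * Mᴴ := by
    rw [chanB, conj_vecMulVec]
    ext i j
    simp [ptraceSnd, Matrix.vecMulVec_apply, Matrix.mul_apply, Matrix.conjTranspose_apply, hM, hφ]
  have hE : chanE U (Matrix.vecMulVec ψ (star ψ)) = Mᵀ * (Mᵀ)ᴴ := by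
    rw [chanE, conj_vecMulVec]
    ext e f
    simp [ptraceFst, Matrix.vecMulVec_apply, Matrix.mul_apply, Matrix.conjTranspose_apply,
      Matrix.transpose_apply, hM, hφ, mul_comm]
  have hconj : (Mᵀ)ᴴ * Mᵀ = (M * Mᴴ).map (starRingEnd ℂ) := by
    ext e f
    simp [Matrix.mul_apply, Matrix.conjTranspose_apply, Matrix.transpose_apply,
      Matrix.map_apply, map_sum, mul_comm]
  rw [cohInfo, hB, hE, vnEntropy_mul_comm Mᵀ, hconj,
    vnEntropy_map_conj (Matrix.isHermitian_mul_conjTranspose_self M), sub_self]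

lemma posSemidef_real_smul {A : Matrix n n ℂ} (hA : A.PosSemidef) {c : ℝ} (hc : 0 ≤ c) :
    ((c : ℂ) • A).PosSemidef := by
  rw [Matrix.posSemidef_iff_dotProduct_mulVec]
  constructor
  · have : ((c:ℂ) • A)ᴴ = (c:ℂ) • A := by
      rw [Matrix.conjTranspose_smul, hA.1]
      congr 1
      simp
    exact this
  · intro x
    have : dotProduct (star x) (((c:ℂ) • A) *ᵥ x) = (c:ℂ) * dotProduct (star x) (A *ᵥ x) := by
      rw [Matrix.smul_mulVec, dotProduct_smul, smul_eq_mul]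
    rw [this]
    exact mul_nonneg (by exact_mod_cast hc) (hA.dotProduct_mulVec_nonneg x)

lemma posSemidef_sum {ι : Type*} [Fintype ι] (f : ι → Matrix n n ℂ)
    (h : ∀ u, (f u).PosSemidef) : (∑ u, f u).PosSemidef := by
  rw [Matrix.posSemidef_iff_dotProduct_mulVec]
  constructor
  · unfold Matrix.IsHermitian
    rw [Matrix.conjTranspose_sum]
    exact Finset.sum_congr rfl fun u _ => (h u).1
  · intro x
    have hmv : (∑ u, f u) *ᵥ x = ∑ u, (f u) *ᵥ x := by
      funext i
      simp only [Matrix.mulVec, dotProduct, Matrix.sum_apply, Finset.sum_apply, Finset.sum_mul]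
      exact Finset.sum_comm
    have hdp : dotProduct (star x) (∑ u, (f u) *ᵥ x)
        = ∑ u, dotProduct (star x) ((f u) *ᵥ x) := by
      simp only [dotProduct, Finset.sum_apply, Finset.mul_sum]
      exact Finset.sum_comm
    rw [hmv, hdp]
    exact Finset.sum_nonneg fun u _ => (h u).dotProduct_mulVec_nonneg x

lemma posSemidef_sub_smul_one {A : Matrix n n ℂ} (hA : A.IsHermitian) {c : ℝ}
    (hc : ∀ i, c ≤ hA.eigenvalues i) : (A - (c : ℂ) • 1).PosSemidef := by
  set V := (hA.eigenvectorUnitary : Matrix n n ℂ) with hVdef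
  have hVV' : V * Vᴴ = 1 := by
    simpa [star_eq_conjTranspose] using Unitary.coe_mul_star_self hA.eigenvectorUnitary
  have hrepr : A - (c:ℂ) • 1
      = V * Matrix.diagonal (fun i => ((hA.eigenvalues i - c : ℝ) : ℂ)) * Vᴴ := by
    have hone : (c:ℂ) • (1 : Matrix n n ℂ) = V * ((c:ℂ) • 1) * Vᴴ := by
      rw [Matrix.mul_smul, Matrix.smul_mul, Matrix.mul_one, hVV']
    have hspec : A = V * Matrix.diagonal (fun i => (hA.eigenvalues i : ℂ)) * Vᴴ := by
      simpa [Function.comp_def, Matrix.star_eq_conjTranspose] using hA.spectral_theorem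
    calc A - (c:ℂ) • 1
        = V * Matrix.diagonal (fun i => (hA.eigenvalues i : ℂ)) * Vᴴ - V * ((c:ℂ) • 1) * Vᴴ := by
          rw [← hspec, ← hone]
      _ = V * (Matrix.diagonal (fun i => (hA.eigenvalues i : ℂ)) - (c:ℂ) • 1) * Vᴴ := by
          rw [Matrix.mul_sub, Matrix.sub_mul]
      _ = V * Matrix.diagonal (fun i => ((hA.eigenvalues i - c : ℝ) : ℂ)) * Vᴴ := by
          congr 1
          congr 1
          ext i j
          by_cases h : i = j <;>
            simp [Matrix.diagonal_apply, h, Matrix.one_apply, Complex.ofReal_sub]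
  rw [hrepr]
  exact (Matrix.PosSemidef.diagonal
    (fun i => Complex.zero_le_real.mpr (by linarith [hc i]))).mul_mul_conjTranspose_same V

lemma posSemidef_smul_one_sub {A : Matrix n n ℂ} (hA : A.IsHermitian) {c : ℝ}
    (hc : ∀ i, hA.eigenvalues i ≤ c) : ((c : ℂ) • 1 - A).PosSemidef := by
  set V := (hA.eigenvectorUnitary : Matrix n n ℂ) with hVdef
  have hVV' : V * Vᴴ = 1 := by
    simpa [star_eq_conjTranspose] using Unitary.coe_mul_star_self hA.eigenvectorUnitary
  have hrepr : (c:ℂ) • 1 - A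
      = V * Matrix.diagonal (fun i => ((c - hA.eigenvalues i : ℝ) : ℂ)) * Vᴴ := by
    have hone : (c:ℂ) • (1 : Matrix n n ℂ) = V * ((c:ℂ) • 1) * Vᴴ := by
      rw [Matrix.mul_smul, Matrix.smul_mul, Matrix.mul_one, hVV']
    have hspec : A = V * Matrix.diagonal (fun i => (hA.eigenvalues i : ℂ)) * Vᴴ := by
      simpa [Function.comp_def, Matrix.star_eq_conjTranspose] using hA.spectral_theorem
    calc (c:ℂ) • 1 - A
        = V * ((c:ℂ) • 1) * Vᴴ - V * Matrix.diagonal (fun i => (hA.eigenvalues i : ℂ)) * Vᴴ := by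
          rw [← hspec, ← hone]
      _ = V * ((c:ℂ) • 1 - Matrix.diagonal (fun i => (hA.eigenvalues i : ℂ))) * Vᴴ := by
          rw [Matrix.mul_sub, Matrix.sub_mul]
      _ = V * Matrix.diagonal (fun i => ((c - hA.eigenvalues i : ℝ) : ℂ)) * Vᴴ := by
          congr 1
          congr 1
          ext i j
          by_cases h : i = j <;>
            simp [Matrix.diagonal_apply, h, Matrix.one_apply, Complex.ofReal_sub]
  rw [hrepr]
  exact (Matrix.PosSemidef.diagonal
    (fun i => Complex.zero_le_real.mpr (by linarith [hc i]))).mul_mul_conjTranspose_same V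

lemma spectral_sum {A : Matrix n n ℂ} (hA : A.IsHermitian) :
    A = ∑ k, ((hA.eigenvalues k : ℝ) : ℂ) •
      Matrix.vecMulVec (fun i => (hA.eigenvectorUnitary : Matrix n n ℂ) i k)
        (star fun i => (hA.eigenvectorUnitary : Matrix n n ℂ) i k) := by
  set V := (hA.eigenvectorUnitary : Matrix n n ℂ) with hVdef
  have hspec : A = V * Matrix.diagonal (fun i => (hA.eigenvalues i : ℂ)) * Vᴴ := by
    simpa [Function.comp_def, Matrix.star_eq_conjTranspose] using hA.spectral_theorem
  conv_lhs => rw [hspec]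
  ext i j
  simp only [Matrix.mul_apply, Matrix.diagonal_apply, Matrix.conjTranspose_apply,
    Matrix.sum_apply, Matrix.smul_apply, Matrix.vecMulVec_apply, Pi.star_apply,
    smul_eq_mul, mul_ite, ite_mul, mul_zero, zero_mul, Finset.sum_ite_eq,
    Finset.sum_ite_eq', Finset.mem_univ, if_true]
  refine Finset.sum_congr rfl fun k _ => by ring

lemma vecMulVec_posSemidef (v : n → ℂ) : (Matrix.vecMulVec v (star v)).PosSemidef := by
  rw [Matrix.posSemidef_iff_dotProduct_mulVec]
  constructor
  · ext i j
    simp [Matrix.vecMulVec_apply, Matrix.conjTranspose_apply, mul_comm]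
  · intro x
    have key : dotProduct (star x) ((Matrix.vecMulVec v (star v)) *ᵥ x)
        = star (dotProduct (star v) x) * dotProduct (star v) x := by
      simp only [dotProduct, Matrix.mulVec, Matrix.vecMulVec_apply, Pi.star_apply,
        star_sum, star_mul', star_star, Finset.mul_sum, Finset.sum_mul]
      rw [Finset.sum_comm]
      refine Finset.sum_congr rfl fun a _ => Finset.sum_congr rfl fun b _ => by ring
    rw [key]
    exact star_mul_self_nonneg _

lemma vecMulVec_trace (v : n → ℂ) :
    (Matrix.vecMulVec v (star v)).trace = ∑ i, v i * star (v i) := by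
  simp [Matrix.trace, Matrix.diag, Matrix.vecMulVec_apply]

lemma holevo_diff (U : Matrix (Fin dB × Fin dE) (Fin dA) ℂ) {m : ℕ} (p : Fin m → ℝ)
    (S : Fin m → Matrix (Fin dA) (Fin dA) ℂ) :
    holevo (chanB U) p S - holevo (chanE U) p S
      = cohInfo U (∑ u, (p u : ℂ) • S u) - ∑ u, p u * cohInfo U (S u) := by
  unfold holevo cohInfo
  simp only [mul_sub, Finset.sum_sub_distrib]
  ring

lemma avg_isState {m : ℕ} {p : Fin m → ℝ} {S : Fin m → Matrix (Fin dA) (Fin dA) ℂ}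
    (h : IsEnsemble p S) : IsState (∑ u, (p u : ℂ) • S u) := by
  constructor
  · exact posSemidef_sum _ fun u => posSemidef_real_smul (h.2.2 u).1 (h.1 u)
  · rw [Matrix.trace_sum]
    simp only [Matrix.trace_smul, smul_eq_mul]
    have : ∀ u, (p u : ℂ) * (S u).trace = (p u : ℂ) := by
      intro u; rw [(h.2.2 u).2, mul_one]
    rw [Finset.sum_congr rfl fun u _ => this u]
    rw [← Complex.ofReal_sum, h.2.1, Complex.ofReal_one]

lemma cp1_bddAbove (hdB : 1 ≤ dB) (hdE : 1 ≤ dE)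
    {U : Matrix (Fin dB × Fin dE) (Fin dA) ℂ} (hU : Uᴴ * U = 1) :
    BddAbove { r | ∃ (m : ℕ) (p : Fin m → ℝ) (σ : Fin m → Matrix (Fin dA) (Fin dA) ℂ),
      IsEnsemble p σ ∧ r = holevo (chanB U) p σ - holevo (chanE U) p σ } := by
  haveI : Nonempty (Fin dB) := ⟨⟨0, hdB⟩⟩
  haveI : Nonempty (Fin dE) := ⟨⟨0, hdE⟩⟩
  refine ⟨Real.log dB + Real.log dE, ?_⟩
  rintro r ⟨m, p, S, hens, rfl⟩
  have havg := avg_isState hens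
  unfold holevo
  have h1 : vnEntropy (chanB U (∑ u, (p u : ℂ) • S u)) ≤ Real.log dB := by
    simpa [Fintype.card_fin] using vnEntropy_state_le (chanB_isState hU havg)
  have h2 : 0 ≤ ∑ u, p u * vnEntropy (chanB U (S u)) :=
    Finset.sum_nonneg fun u _ => mul_nonneg (hens.1 u)
      (vnEntropy_state_nonneg (chanB_isState hU (hens.2.2 u)))
  have h3 : 0 ≤ vnEntropy (chanE U (∑ u, (p u : ℂ) • S u)) :=
    vnEntropy_state_nonneg (chanE_isState hU havg)
  have h4 : ∑ u, p u * vnEntropy (chanE U (S u)) ≤ Real.log dE := by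
    calc ∑ u, p u * vnEntropy (chanE U (S u))
        ≤ ∑ u, p u * Real.log dE := by
          refine Finset.sum_le_sum fun u _ => ?_
          refine mul_le_mul_of_nonneg_left ?_ (hens.1 u)
          simpa [Fintype.card_fin] using vnEntropy_state_le (chanE_isState hU (hens.2.2 u))
      _ = Real.log dE := by rw [← Finset.sum_mul, hens.2.1, one_mul]
  linarith


/-- If some state has strictly negative coherent information and the maximum
of the coherent information is attained at a full-rank (positive definite) state, then
`C_p^{(1)}(N_B) > Q^{(1)}(N_B)`. -/
theorem full_rank_maximizer_and_negative_cohInfo_implies_Cp1_gt_Q1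
    {dA dB dE : ℕ} (hdA : 1 ≤ dA) (hdB : 1 ≤ dB) (hdE : 1 ≤ dE)
    (U : Matrix (Fin dB × Fin dE) (Fin dA) ℂ) (hU : Uᴴ * U = 1)
    (hneg : ∃ ρhat : Matrix (Fin dA) (Fin dA) ℂ, IsState ρhat ∧ cohInfo U ρhat < 0)
    (hmax : ∃ ρstar : Matrix (Fin dA) (Fin dA) ℂ,
      IsState ρstar ∧ ρstar.PosDef ∧ cohInfo U ρstar = Q1 U) :
    Q1 U < Cp1 U := by
  classical
  obtain ⟨ρh, hρh, hρhneg⟩ := hneg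
  obtain ⟨ρs, hρs, hpd, hQ⟩ := hmax
  haveI hne : Nonempty (Fin dA) := ⟨⟨0, hdA⟩⟩
  have hHs : ρs.IsHermitian := hρs.1.1
  set c : ℝ := Finset.univ.inf' Finset.univ_nonempty hHs.eigenvalues with hc
  have hc0 : 0 < c := by
    rw [hc, Finset.lt_inf'_iff]
    exact fun i _ => hpd.eigenvalues_pos i
  set ε : ℝ := min c 2⁻¹ with hε
  have hε0 : 0 < ε := lt_min hc0 (by norm_num)
  have hεhalf : ε ≤ 2⁻¹ := min_le_right _ _
  have hε1 : ε < 1 := by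
    have : (2:ℝ)⁻¹ < 1 := by norm_num
    linarith
  have hεc : ε ≤ c := min_le_left _ _
  have h1ε : (0:ℝ) < 1 - ε := by linarith
  -- eigenvalues of ρh are at most 1
  have hρh1 : ∀ i, hρh.1.1.eigenvalues i ≤ 1 := by
    intro i
    calc hρh.1.1.eigenvalues i ≤ ∑ j, hρh.1.1.eigenvalues j :=
          Finset.single_le_sum (fun j _ => hρh.1.eigenvalues_nonneg j) (Finset.mem_univ i)
      _ = 1 := sum_eigenvalues_of_state hρh
  -- τ := ρs - ε ρh is PSD
  have hτ : (ρs - (ε:ℂ) • ρh).PosSemidef := by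
    have h1 : (ρs - (ε:ℂ) • 1).PosSemidef :=
      posSemidef_sub_smul_one hHs
        (fun i => le_trans hεc (by rw [hc]; exact Finset.inf'_le _ (Finset.mem_univ i)))
    have h2 : (((1:ℝ):ℂ) • (1 : Matrix (Fin dA) (Fin dA) ℂ) - ρh).PosSemidef :=
      posSemidef_smul_one_sub hρh.1.1 hρh1
    have h3 := posSemidef_real_smul h2 hε0.le
    have heq : ρs - (ε:ℂ) • ρh
        = (ρs - (ε:ℂ) • 1) + (ε:ℂ) • (((1:ℝ):ℂ) • (1 : Matrix (Fin dA) (Fin dA) ℂ) - ρh) := by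
      rw [smul_sub]
      push_cast
      rw [one_smul]
      abel
    rw [heq]
    exact h1.add h3
  have hτtr : (ρs - (ε:ℂ) • ρh).trace = ((1 - ε : ℝ) : ℂ) := by
    rw [Matrix.trace_sub, Matrix.trace_smul, hρs.2, hρh.2, smul_eq_mul, mul_one]
    push_cast
    ring
  set σm : Matrix (Fin dA) (Fin dA) ℂ := (((1-ε)⁻¹ : ℝ) : ℂ) • (ρs - (ε:ℂ) • ρh) with hσm
  have hσstate : IsState σm := by
    constructor
    · exact posSemidef_real_smul hτ (by positivity)
    · rw [hσm, Matrix.trace_smul, hτtr, smul_eq_mul, ← Complex.ofReal_mul]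
      rw [inv_mul_cancel₀ (ne_of_gt h1ε)]
      exact Complex.ofReal_one
  have hHσ : σm.IsHermitian := hσstate.1.1
  set lam : Fin dA → ℝ := hHσ.eigenvalues with hlam
  set V : Matrix (Fin dA) (Fin dA) ℂ := (hHσ.eigenvectorUnitary : Matrix (Fin dA) (Fin dA) ℂ)
    with hVdef
  set v : Fin dA → (Fin dA → ℂ) := fun k => (fun i => V i k) with hv
  have hVV : Vᴴ * V = 1 := by
    simpa [star_eq_conjTranspose] using Unitary.coe_star_mul_self hHσ.eigenvectorUnitary
  have hvnorm : ∀ k, (Matrix.vecMulVec (v k) (star (v k))).trace = 1 := by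
    intro k
    rw [vecMulVec_trace]
    have h1 : (Vᴴ * V) k k = 1 := by rw [hVV, Matrix.one_apply_eq]
    rw [Matrix.mul_apply] at h1
    calc ∑ i, v k i * star (v k i) = ∑ i, Vᴴ k i * V i k := by
          refine Finset.sum_congr rfl fun i _ => ?_
          simp [hv, Matrix.conjTranspose_apply, mul_comm]
      _ = 1 := h1
  set p : Fin (dA+1) → ℝ := Fin.snoc (fun k => (1-ε) * lam k) ε with hp
  set S : Fin (dA+1) → Matrix (Fin dA) (Fin dA) ℂ :=
    Fin.snoc (fun k => Matrix.vecMulVec (v k) (star (v k))) ρh with hS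
  have hSstate : ∀ u, IsState (S u) := by
    intro u
    refine Fin.lastCases ?_ ?_ u
    · rw [hS]; simp only [Fin.snoc_last]; exact hρh
    · intro k
      rw [hS]; simp only [Fin.snoc_castSucc]
      exact ⟨vecMulVec_posSemidef _, hvnorm k⟩
  have hens : IsEnsemble p S := by
    refine ⟨?_, ?_, hSstate⟩
    · intro u
      refine Fin.lastCases ?_ ?_ u
      · rw [hp]; simp only [Fin.snoc_last]; exact hε0.le
      · intro k
        rw [hp]; simp only [Fin.snoc_castSucc]
        exact mul_nonneg h1ε.le (hσstate.1.eigenvalues_nonneg k)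
    · rw [Fin.sum_univ_castSucc]
      rw [hp]
      simp only [Fin.snoc_castSucc, Fin.snoc_last]
      rw [← Finset.mul_sum]
      have : ∑ k, lam k = 1 := sum_eigenvalues_of_state hσstate
      rw [this]
      ring
  have havg : ∑ u, (p u : ℂ) • S u = ρs := by
    rw [Fin.sum_univ_castSucc]
    rw [hp, hS]
    simp only [Fin.snoc_castSucc, Fin.snoc_last]
    have hstep : ∀ k : Fin dA, (((1-ε) * lam k : ℝ) : ℂ) • Matrix.vecMulVec (v k) (star (v k))
        = ((1-ε:ℝ):ℂ) • (((lam k : ℝ):ℂ) • Matrix.vecMulVec (v k) (star (v k))) := by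
      intro k
      rw [smul_smul, ← Complex.ofReal_mul]
    rw [Finset.sum_congr rfl fun k _ => hstep k, ← Finset.smul_sum]
    have hσsum : ∑ k, ((lam k : ℝ) : ℂ) • Matrix.vecMulVec (v k) (star (v k)) = σm := by
      exact (spectral_sum hHσ).symm
    rw [hσsum, hσm, smul_smul, ← Complex.ofReal_mul, mul_inv_cancel₀ (ne_of_gt h1ε),
      Complex.ofReal_one, one_smul]
    abel
  set r : ℝ := holevo (chanB U) p S - holevo (chanE U) p S with hr
  have hrval : r = cohInfo U ρs - ε * cohInfo U ρh := by
    rw [hr, holevo_diff, havg]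
    congr 1
    rw [Fin.sum_univ_castSucc, hp, hS]
    simp only [Fin.snoc_castSucc, Fin.snoc_last]
    rw [Finset.sum_congr rfl fun k _ => by rw [cohInfo_pure U (v k), mul_zero]]
    simp
  have hmem : r ∈ { x | ∃ (m : ℕ) (p : Fin m → ℝ) (σ : Fin m → Matrix (Fin dA) (Fin dA) ℂ),
      IsEnsemble p σ ∧ x = holevo (chanB U) p σ - holevo (chanE U) p σ } :=
    ⟨dA+1, p, S, hens, hr⟩
  have hQr : Q1 U < r := by
    rw [hrval, ← hQ]
    have : ε * cohInfo U ρh < 0 := mul_neg_of_pos_of_neg hε0 hρhneg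
    linarith
  calc Q1 U < r := hQr
    _ ≤ Cp1 U := le_csSup (cp1_bddAbove hdB hdE hU) hmem

end
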